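/- arXiv:1909.03910 — 2 statements merged into one kernel-verified Lean document; each statement's English description precedes it below -/
import Mathlib

section
/- In the Artin braid group B_n with a_{i,j} = σ_{j-1}⋯σ_i, for all indices with i < k < l ≤ j one has a_{i,j}a_{k,l} = a_{k-1,l-1}a_{i,j}. -/
/-- `a_{i,j} = σ_{j-1} σ_{j-2} ⋯ σ_i`. -/
def aWord {G : Type*} [Group G] (σ : ℕ → G) (i j : ℕ) : G :=
  ((List.range (j - i)).map (fun t => σ (j - 1 - t))).prod

lemma aWord_split {G : Type*} [Group G] (σ : ℕ → G) (i m j : ℕ) (him : i ≤ m) (hmj : m ≤ j) :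
    aWord σ i j = aWord σ m j * aWord σ i m := by
  unfold aWord
  rw [show j - i = (j - m) + (m - i) by omega, List.range_add, List.map_append,
    List.prod_append, List.map_map]
  congr 1
  refine congrArg List.prod ?_
  apply List.map_congr_left
  intro t ht
  simp only [List.mem_range] at ht
  simp only [Function.comp]
  congr 1
  omega

lemma aWord_pred {G : Type*} [Group G] (σ : ℕ → G) (j : ℕ) (hj : 1 ≤ j) :
    aWord σ (j - 1) j = σ (j - 1) := by
  unfold aWord
  rw [show j - (j - 1) = 1 by omega]
  simp [List.range_succ]

lemma aWord_succ {G : Type*} [Group G] (σ : ℕ → G) (i j : ℕ) (hij : i < j) :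
    aWord σ i j = σ (j - 1) * aWord σ i (j - 1) := by
  rw [aWord_split σ i (j - 1) j (by omega) (by omega), aWord_pred σ j (by omega)]

lemma commute_aWord {G : Type*} [Group G] (σ : ℕ → G) (g : G) (i j : ℕ)
    (h : ∀ t, i ≤ t → t < j → Commute g (σ t)) : g * aWord σ i j = aWord σ i j * g := by
  have : Commute g (aWord σ i j) := by
    apply Commute.list_prod_right
    intro x hx
    simp only [List.mem_map, List.mem_range] at hx
    obtain ⟨t, ht, rfl⟩ := hx
    exact h _ (by omega) (by omega)
  exact this

lemma key {G : Type*} [Group G] (n : ℕ) (σ : ℕ → G)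
    (hcomm : ∀ i j : ℕ, 1 ≤ i → i + 1 < j → j ≤ n - 1 → σ i * σ j = σ j * σ i)
    (hbraid : ∀ i : ℕ, 1 ≤ i → i + 1 ≤ n - 1 →
      σ i * σ (i + 1) * σ i = σ (i + 1) * σ i * σ (i + 1))
    (i t j : ℕ) (h1 : 1 ≤ i) (hit : i < t) (htj : t < j) (hjn : j ≤ n) :
    aWord σ i j * σ t = σ (t - 1) * aWord σ i j := by
  have hd : aWord σ i j = aWord σ (t + 1) j * (σ t * (σ (t - 1) * aWord σ i (t - 1))) := by
    rw [aWord_split σ i (t + 1) j (by omega) (by omega), aWord_succ σ i (t + 1) (by omega)]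
    rw [show t + 1 - 1 = t by omega, aWord_succ σ i t (by omega)]
  have hB : aWord σ i (t - 1) * σ t = σ t * aWord σ i (t - 1) := by
    refine (commute_aWord σ (σ t) i (t - 1) ?_).symm
    intro s hs1 hs2
    exact (hcomm s t (by omega) (by omega) (by omega)).symm
  have hA : σ (t - 1) * aWord σ (t + 1) j = aWord σ (t + 1) j * σ (t - 1) := by
    refine commute_aWord σ (σ (t - 1)) (t + 1) j ?_
    intro s hs1 hs2
    exact hcomm (t - 1) s (by omega) (by omega) (by omega)
  have hb : σ (t - 1) * σ t * σ (t - 1) = σ t * σ (t - 1) * σ t := by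
    have := hbraid (t - 1) (by omega) (by omega)
    rwa [show t - 1 + 1 = t by omega] at this
  have hb' : ∀ x : G, σ t * (σ (t - 1) * (σ t * x)) = σ (t - 1) * (σ t * (σ (t - 1) * x)) := by
    intro x
    simp only [← mul_assoc]
    rw [← hb]
  have hA' : ∀ x : G,
      aWord σ (t + 1) j * (σ (t - 1) * x) = σ (t - 1) * (aWord σ (t + 1) j * x) := by
    intro x
    simp only [← mul_assoc]
    rw [hA]
  rw [hd]
  simp only [mul_assoc]
  rw [hB, hb' (aWord σ i (t - 1)), hA']

/-- In the Artin braid group `B_n`, with `a_{i,j} = σ_{j-1} ⋯ σ_i`, one has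
`a_{i,j} a_{k,l} = a_{k-1,l-1} a_{i,j}` for all `i < k < l ≤ j`. -/
theorem stmt_2 {G : Type*} [Group G] (n : ℕ) (σ : ℕ → G)
    (hcomm : ∀ i j : ℕ, 1 ≤ i → i + 1 < j → j ≤ n - 1 → σ i * σ j = σ j * σ i)
    (hbraid : ∀ i : ℕ, 1 ≤ i → i + 1 ≤ n - 1 →
      σ i * σ (i + 1) * σ i = σ (i + 1) * σ i * σ (i + 1))
    (i k l j : ℕ) (h1 : 1 ≤ i) (hik : i < k) (hkl : k < l) (hlj : l ≤ j) (hjn : j ≤ n) :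
    aWord σ i j * aWord σ k l = aWord σ (k - 1) (l - 1) * aWord σ i j := by
  induction l, hkl using Nat.le_induction with
  | base =>
    have e1 : aWord σ k (k + 1) = σ k := by
      simpa using aWord_pred σ (k + 1) (by omega)
    have e2 : aWord σ (k - 1) (k + 1 - 1) = σ (k - 1) := by
      simpa using aWord_pred σ k (by omega)
    rw [e1, e2]
    exact key n σ hcomm hbraid i k j h1 hik (by omega) hjn
  | succ m hm ih =>
    have hmj : m ≤ j := by omega
    rw [aWord_succ σ k (m + 1) (by omega), show m + 1 - 1 = m by omega,
      ← mul_assoc, key n σ hcomm hbraid i m j h1 (by omega) (by omega) hjn, mul_assoc,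
      ih hmj, aWord_succ σ (k - 1) m (by omega), mul_assoc]
end

section
/- Let Γ be a simple graph on {1,…,n} containing no 3-cycle, and let P(Γ) be the abelian group with one generator s_{i,j} for each edge {i,j} of Γ and no further relations (the quotient of the pure braid group P_n by the normal closure of the generators s_{i,j} with {i,j} ∉ E(Γ)). Then P(Γ) is a free abelian group of rank |E(Γ)|. -/
/-- Generators of the pure braid group: pairs `(i, j)` with `i < j`. -/
def PBGen (n : ℕ) := {p : Fin n × Fin n // p.1 < p.2}

/-- The free-group generator `s_{i,j}` for `i < j`. -/
def sg {n : ℕ} (i j : Fin n) (h : i < j) : FreeGroup (PBGen n) :=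
  FreeGroup.of ⟨(i, j), h⟩

/-- Markoff's (Burau) relators for the pure braid group `P_n`:
(1) `s_{i,j} s_{k,l} = s_{k,l} s_{i,j}` for `i<j<k<l` and for `i<k<l<j`;
(2) `s_{i,j} s_{i,k} s_{j,k} = s_{i,k} s_{j,k} s_{i,j} = s_{j,k} s_{i,j} s_{i,k}` for `i<j<k`;
(3) `s_{i,k} s_{j,k} s_{j,l} s_{j,k}⁻¹ = s_{j,k} s_{j,l} s_{j,k}⁻¹ s_{i,k}` for `i<j<k<l`. -/
def markoffRels (n : ℕ) : Set (FreeGroup (PBGen n)) :=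
  {r | ∃ (i j k l : Fin n) (hij : i < j) (_ : j < k) (hkl : k < l),
      r = sg i j hij * sg k l hkl * (sg i j hij)⁻¹ * (sg k l hkl)⁻¹} ∪
  {r | ∃ (i k l j : Fin n) (hik : i < k) (hkl : k < l) (hlj : l < j),
      r = sg i j (hik.trans (hkl.trans hlj)) * sg k l hkl *
        (sg i j (hik.trans (hkl.trans hlj)))⁻¹ * (sg k l hkl)⁻¹} ∪
  {r | ∃ (i j k : Fin n) (hij : i < j) (hjk : j < k),
      r = sg i j hij * sg i k (hij.trans hjk) * sg j k hjk *
        (sg i k (hij.trans hjk) * sg j k hjk * sg i j hij)⁻¹} ∪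
  {r | ∃ (i j k : Fin n) (hij : i < j) (hjk : j < k),
      r = sg i j hij * sg i k (hij.trans hjk) * sg j k hjk *
        (sg j k hjk * sg i j hij * sg i k (hij.trans hjk))⁻¹} ∪
  {r | ∃ (i j k l : Fin n) (hij : i < j) (hjk : j < k) (hkl : k < l),
      r = sg i k (hij.trans hjk) * sg j k hjk * sg j l (hjk.trans hkl) * (sg j k hjk)⁻¹ *
        (sg j k hjk * sg j l (hjk.trans hkl) * (sg j k hjk)⁻¹ * sg i k (hij.trans hjk))⁻¹}

/-- `P(Γ)`: the quotient of the pure braid group `P_n` (with Markoff's presentation) by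
the normal closure of the generators `s_{i,j}` with `{i,j} ∉ E(Γ)`. -/
abbrev chromPure {n : ℕ} (Γ : SimpleGraph (Fin n)) :=
  PresentedGroup (markoffRels n ∪ {r | ∃ (i j : Fin n) (h : i < j), ¬ Γ.Adj i j ∧ r = sg i j h})

namespace ChromAux

variable {n : ℕ}

/-- The full relator set of `chromPure Γ`. -/
abbrev rset (Γ : SimpleGraph (Fin n)) : Set (FreeGroup (PBGen n)) :=
  markoffRels n ∪ {r | ∃ (i j : Fin n) (h : i < j), ¬ Γ.Adj i j ∧ r = sg i j h}

/-- The image of the generator `s_{i,j}` in `chromPure Γ`. -/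
def t (Γ : SimpleGraph (Fin n)) (i j : Fin n) (h : i < j) : chromPure Γ :=
  PresentedGroup.mk (rset Γ) (sg i j h)

lemma t_eq_of (Γ : SimpleGraph (Fin n)) (i j : Fin n) (h : i < j) :
    t Γ i j h = PresentedGroup.of (rels := rset Γ) ⟨(i, j), h⟩ := rfl

variable {Γ : SimpleGraph (Fin n)}

lemma mk_rel {r : FreeGroup (PBGen n)} (hr : r ∈ rset Γ) :
    PresentedGroup.mk (rset Γ) r = 1 :=
  (QuotientGroup.eq_one_iff r).mpr (Subgroup.subset_normalClosure hr)

lemma tkill {i j : Fin n} (h : i < j) (hna : ¬ Γ.Adj i j) : t Γ i j h = 1 :=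
  mk_rel (Or.inr ⟨i, j, h, hna, rfl⟩)

lemma relA {i j k l : Fin n} (hij : i < j) (hjk : j < k) (hkl : k < l) :
    Commute (t Γ i j hij) (t Γ k l hkl) := by
  have h := mk_rel (Γ := Γ)
    (Or.inl (Or.inl (Or.inl (Or.inl (Or.inl ⟨i, j, k, l, hij, hjk, hkl, rfl⟩)))))
  simp only [map_mul, map_inv] at h
  exact commutatorElement_eq_one_iff_commute.mp h

lemma relB {i k l j : Fin n} (hik : i < k) (hkl : k < l) (hlj : l < j) :
    Commute (t Γ i j (hik.trans (hkl.trans hlj))) (t Γ k l hkl) := by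
  have h := mk_rel (Γ := Γ)
    (Or.inl (Or.inl (Or.inl (Or.inl (Or.inr ⟨i, k, l, j, hik, hkl, hlj, rfl⟩)))))
  simp only [map_mul, map_inv] at h
  exact commutatorElement_eq_one_iff_commute.mp h

lemma rel2a {i j k : Fin n} (hij : i < j) (hjk : j < k) :
    t Γ i j hij * t Γ i k (hij.trans hjk) * t Γ j k hjk =
      t Γ i k (hij.trans hjk) * t Γ j k hjk * t Γ i j hij := by
  have h := mk_rel (Γ := Γ)
    (Or.inl (Or.inl (Or.inl (Or.inr ⟨i, j, k, hij, hjk, rfl⟩))))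
  simp only [map_mul, map_inv] at h
  exact mul_inv_eq_one.mp h

lemma rel2b {i j k : Fin n} (hij : i < j) (hjk : j < k) :
    t Γ i j hij * t Γ i k (hij.trans hjk) * t Γ j k hjk =
      t Γ j k hjk * t Γ i j hij * t Γ i k (hij.trans hjk) := by
  have h := mk_rel (Γ := Γ)
    (Or.inl (Or.inl (Or.inr ⟨i, j, k, hij, hjk, rfl⟩)))
  simp only [map_mul, map_inv] at h
  exact mul_inv_eq_one.mp h

lemma rel3 {i j k l : Fin n} (hij : i < j) (hjk : j < k) (hkl : k < l) :
    Commute (t Γ i k (hij.trans hjk))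
      (t Γ j k hjk * t Γ j l (hjk.trans hkl) * (t Γ j k hjk)⁻¹) := by
  have h := mk_rel (Γ := Γ)
    (Or.inl (Or.inr ⟨i, j, k, l, hij, hjk, hkl, rfl⟩))
  simp only [map_mul, map_inv] at h
  have h' := mul_inv_eq_one.mp h
  unfold Commute SemiconjBy
  rw [← mul_assoc, ← mul_assoc]
  exact h'

/-- If `s_{j,k} = 1` then `s_{i,j}` and `s_{i,k}` commute. -/
lemma s1 {i j k : Fin n} (hij : i < j) (hjk : j < k) (h0 : t Γ j k hjk = 1) :
    Commute (t Γ i j hij) (t Γ i k (hij.trans hjk)) := by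
  have h := rel2a (Γ := Γ) hij hjk
  rw [h0, mul_one] at h
  exact h

/-- If `s_{i,k} = 1` then `s_{i,j}` and `s_{j,k}` commute. -/
lemma s2 {i j k : Fin n} (hij : i < j) (hjk : j < k) (h0 : t Γ i k (hij.trans hjk) = 1) :
    Commute (t Γ i j hij) (t Γ j k hjk) := by
  have h := rel2a (Γ := Γ) hij hjk
  rw [h0, mul_one, one_mul] at h
  exact h

/-- If `s_{i,j} = 1` then `s_{i,k}` and `s_{j,k}` commute. -/
lemma s3 {i j k : Fin n} (hij : i < j) (hjk : j < k) (h0 : t Γ i j hij = 1) :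
    Commute (t Γ i k (hij.trans hjk)) (t Γ j k hjk) := by
  have h := (rel2a (Γ := Γ) hij hjk).symm.trans (rel2b hij hjk)
  rw [h0, mul_one, mul_one] at h
  exact h

variable (htri : ∀ i j k : Fin n, ¬(Γ.Adj i j ∧ Γ.Adj j k ∧ Γ.Adj i k))
include htri

lemma comm_aux {i j k l : Fin n} (hij : i < j) (hkl : k < l) (hik : i ≤ k) :
    Commute (t Γ i j hij) (t Γ k l hkl) := by
  by_cases hA : Γ.Adj i j
  · by_cases hB : Γ.Adj k l
    · rcases hik.lt_or_eq with hik | rfl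
      · rcases lt_trichotomy j k with hjk | rfl | hkj
        · exact relA hij hjk hkl
        · -- pairs (i,j), (j,l)
          exact s2 hij hkl (tkill _ fun hal => htri i j l ⟨hA, hB, hal⟩)
        · rcases lt_trichotomy j l with hjl | rfl | hlj
          · -- interleaved i < k < j < l
            have h3 := rel3 (Γ := Γ) hik hkj hjl
            by_cases hC : Γ.Adj k j
            · have hc : Commute (t Γ k j hkj) (t Γ k l hkl) :=
                s1 hkj hjl (tkill _ fun hjl' => htri k j l ⟨hC, hjl', hB⟩)
              have : t Γ k j hkj * t Γ k l hkl * (t Γ k j hkj)⁻¹ = t Γ k l hkl := by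
                rw [hc.eq, mul_inv_cancel_right]
              rwa [this] at h3
            · rw [tkill hkj hC, one_mul, inv_one, mul_one] at h3
              exact h3
          · -- pairs (i,j), (k,j)
            exact s3 hik hkj (tkill _ fun hik' => htri i k j ⟨hik', hB, hA⟩)
          · exact relB hik hkl hlj
      · rcases lt_trichotomy j l with hjl | rfl | hlj
        · exact s1 hij hjl (tkill _ fun h' => htri i j l ⟨hA, h', hB⟩)
        · exact Commute.refl _
        · exact (s1 hkl hlj (tkill _ fun h' => htri i l j ⟨hB, h', hA⟩)).symm
    · rw [tkill hkl hB]; exact Commute.one_right _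
  · rw [tkill hij hA]; exact Commute.one_left _

lemma comm_gen {i j k l : Fin n} (hij : i < j) (hkl : k < l) :
    Commute (t Γ i j hij) (t Γ k l hkl) := by
  rcases le_total i k with h | h
  · exact comm_aux htri hij hkl h
  · exact (comm_aux htri hkl hij h).symm

lemma central (x : PBGen n) (b : chromPure Γ) :
    Commute (PresentedGroup.of (rels := rset Γ) x) b := by
  have hb : b ∈ Subgroup.centralizer {PresentedGroup.of (rels := rset Γ) x} := by
    refine PresentedGroup.generated_by _ _ (fun y => ?_) b
    rw [Subgroup.mem_centralizer_iff]
    rintro g hg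
    rw [Set.mem_singleton_iff] at hg
    subst hg
    obtain ⟨⟨i, j⟩, hij⟩ := x
    obtain ⟨⟨k, l⟩, hkl⟩ := y
    exact comm_gen htri hij hkl
  exact Subgroup.mem_centralizer_iff.mp hb _ rfl

lemma mul_comm_all (a b : chromPure Γ) : a * b = b * a := by
  have ha : a ∈ Subgroup.centralizer {b} := by
    refine PresentedGroup.generated_by _ _ (fun y => ?_) a
    rw [Subgroup.mem_centralizer_iff]
    rintro g hg
    rw [Set.mem_singleton_iff] at hg
    subst hg
    exact (central htri y g).symm
  exact (Subgroup.mem_centralizer_iff.mp ha b rfl).symm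

omit htri

section CommLemmas
variable {M : Type*} [CommGroup M]

lemma cg1 (a b : M) : a * b * a⁻¹ * b⁻¹ = 1 := by rw [mul_comm a b]; group

lemma cg2 (a b c : M) : a * b * c * (b * c * a)⁻¹ = 1 := by
  rw [mul_inv_eq_one, mul_comm a b, mul_assoc, mul_comm a c, ← mul_assoc]

lemma cg3 (a b c : M) : a * b * c * (c * a * b)⁻¹ = 1 := by
  rw [mul_inv_eq_one, mul_comm c a, mul_assoc a b c, mul_assoc a c b, mul_comm b c]

lemma cg4 (a b c : M) : a * b * c * b⁻¹ * (b * c * b⁻¹ * a)⁻¹ = 1 := by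
  rw [mul_inv_eq_one, mul_comm (b * c * b⁻¹) a]; group

end CommLemmas

open scoped Classical in
/-- The map on generators underlying `chromPure Γ →* Multiplicative (FreeAbelianGroup E)`. -/
noncomputable def fwd (Γ : SimpleGraph (Fin n)) (x : PBGen n) :
    Multiplicative (FreeAbelianGroup Γ.edgeSet) :=
  if h : Γ.Adj x.1.1 x.1.2 then
    Multiplicative.ofAdd (FreeAbelianGroup.of ⟨s(x.1.1, x.1.2), Γ.mem_edgeSet.mpr h⟩)
  else 1

lemma fwd_rels : ∀ r ∈ rset Γ, FreeGroup.lift (fwd Γ) r = 1 := by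
  rintro r
    (((((⟨i, j, k, l, hij, hjk, hkl, rfl⟩ | ⟨i, k, l, j, hik, hkl, hlj, rfl⟩) |
        ⟨i, j, k, hij, hjk, rfl⟩) | ⟨i, j, k, hij, hjk, rfl⟩) |
        ⟨i, j, k, l, hij, hjk, hkl, rfl⟩) | ⟨i, j, h, hna, rfl⟩) <;>
    simp only [sg, map_mul, map_inv, FreeGroup.lift_apply_of]
  · exact cg1 _ _
  · exact cg1 _ _
  · exact cg2 _ _ _
  · exact cg3 _ _ _
  · exact cg4 _ _ _
  · exact FreeGroup.lift_apply_of.trans (dif_neg hna)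

/-- The forward homomorphism. -/
noncomputable def φh (Γ : SimpleGraph (Fin n)) :
    chromPure Γ →* Multiplicative (FreeAbelianGroup Γ.edgeSet) :=
  PresentedGroup.toGroup (fwd_rels (Γ := Γ))

lemma φh_of {i j : Fin n} (h : i < j) : φh Γ (t Γ i j h) = fwd Γ ⟨(i, j), h⟩ :=
  PresentedGroup.toGroup.of _

/-- Symmetrized generator map on `Sym2`. -/
def gsym (Γ : SimpleGraph (Fin n)) : Sym2 (Fin n) → chromPure Γ :=
  Sym2.lift ⟨fun i j => if h : i < j then t Γ i j h else if h' : j < i then t Γ j i h' else 1, by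
    intro i j
    rcases lt_trichotomy i j with h | rfl | h
    · simp only [dif_pos h, dif_neg (asymm h)]
    · rfl
    · simp only [dif_pos h, dif_neg (asymm h)]⟩

lemma gsym_pair {i j : Fin n} (h : i < j) : gsym Γ s(i, j) = t Γ i j h := by
  rw [gsym, Sym2.lift_mk]
  exact dif_pos h

lemma gsym_pair' {i j : Fin n} (h : j < i) : gsym Γ s(i, j) = t Γ j i h := by
  rw [gsym, Sym2.lift_mk]
  dsimp only
  rw [dif_neg (asymm h), dif_pos h]

end ChromAux

open ChromAux in
/-- If `Γ` contains no 3-circuit, then `P(Γ)` is a free abelian group on the edge set of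
`Γ`, the isomorphism sending the class of `s_{i,j}` (for `{i,j} ∈ E(Γ)`) to the basis
element indexed by the edge `{i,j}`. -/
theorem stmt_15 {n : ℕ} (Γ : SimpleGraph (Fin n))
    (htri : ∀ i j k : Fin n, ¬(Γ.Adj i j ∧ Γ.Adj j k ∧ Γ.Adj i k)) :
    ∃ φ : chromPure Γ ≃* Multiplicative (FreeAbelianGroup Γ.edgeSet),
      ∀ (i j : Fin n) (h : i < j) (he : Γ.Adj i j),
        φ (PresentedGroup.of ⟨(i, j), h⟩) =
          Multiplicative.ofAdd (FreeAbelianGroup.of ⟨s(i, j), Γ.mem_edgeSet.mpr he⟩) := by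
  classical
  letI : CommGroup (chromPure Γ) :=
    { (inferInstance : Group (chromPure Γ)) with mul_comm := mul_comm_all htri }
  let addHom : FreeAbelianGroup Γ.edgeSet →+ Additive (chromPure Γ) :=
    FreeAbelianGroup.lift (fun e => Additive.ofMul (gsym Γ e.1))
  let ψ : Multiplicative (FreeAbelianGroup Γ.edgeSet) →* chromPure Γ :=
    AddMonoidHom.toMultiplicativeLeft addHom
  have hψ_of : ∀ (e : Γ.edgeSet),
      ψ (Multiplicative.ofAdd (FreeAbelianGroup.of e)) = gsym Γ e.1 := by
    intro e
    show Additive.toMul (addHom (FreeAbelianGroup.of e)) = gsym Γ e.1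
    rw [FreeAbelianGroup.lift_apply_of]
    rfl
  have h1 : (ψ.comp (φh Γ)) = MonoidHom.id (chromPure Γ) := by
    ext x
    obtain ⟨⟨i, j⟩, hij⟩ := x
    rw [MonoidHom.comp_apply, MonoidHom.id_apply, ← t_eq_of, φh_of]
    by_cases hA : Γ.Adj i j
    · rw [show fwd Γ ⟨(i, j), hij⟩ =
          Multiplicative.ofAdd (FreeAbelianGroup.of ⟨s(i, j), Γ.mem_edgeSet.mpr hA⟩) from
          dif_pos hA, hψ_of]
      exact gsym_pair hij
    · rw [show fwd Γ ⟨(i, j), hij⟩ = 1 from dif_neg hA, map_one]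
      exact (tkill hij hA).symm
  have h2 : ((φh Γ).comp ψ) = MonoidHom.id _ := by
    refine MonoidHom.ext fun m => ?_
    rw [MonoidHom.comp_apply, MonoidHom.id_apply]
    have key : ∀ a : FreeAbelianGroup Γ.edgeSet,
        φh Γ (ψ (Multiplicative.ofAdd a)) = Multiplicative.ofAdd a := by
      intro a
      refine FreeAbelianGroup.induction_on a ?_ ?_ ?_ ?_
      · simp
      · rintro ⟨s, hs⟩
        induction s using Sym2.ind with
        | _ i j =>
          have hadj : Γ.Adj i j := Γ.mem_edgeSet.mp hs
          rw [hψ_of]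
          rcases lt_or_gt_of_ne hadj.ne with h | h
          · rw [gsym_pair h, φh_of, show fwd Γ ⟨(i, j), h⟩ =
              Multiplicative.ofAdd (FreeAbelianGroup.of ⟨s(i, j), Γ.mem_edgeSet.mpr hadj⟩) from
              dif_pos hadj]
          · rw [gsym_pair' h, φh_of, show fwd Γ ⟨(j, i), h⟩ =
              Multiplicative.ofAdd
                (FreeAbelianGroup.of ⟨s(j, i), Γ.mem_edgeSet.mpr hadj.symm⟩) from
              dif_pos hadj.symm]
            have hsub : (⟨s(j, i), Γ.mem_edgeSet.mpr hadj.symm⟩ : Γ.edgeSet) =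
                ⟨s(i, j), hs⟩ := Subtype.ext Sym2.eq_swap
            rw [hsub]
      · intro e he
        rw [ofAdd_neg, map_inv, map_inv, he]
      · intro x y hx hy
        rw [ofAdd_add, map_mul, map_mul, hx, hy]
    have := key (Multiplicative.toAdd m)
    simpa using this
  refine ⟨MonoidHom.toMulEquiv (φh Γ) ψ h1 h2, fun i j h he => ?_⟩
  show φh Γ (PresentedGroup.of ⟨(i, j), h⟩) = _
  rw [← t_eq_of, φh_of]
  exact dif_pos he
end
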